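/- Let F be an algebraically closed field, and let L ∈ F[a₁, a₂, a₃, a₁₂, a₁₃, a₂₃, a₁₂₃] be the polynomial L = a₁₂₃² − a₁₂₃(a₁₂ a₃ + a₁₃ a₂ + a₂₃ a₁ − a₁ a₂ a₃) + (a₁² + a₂² + a₃² + a₁₂² + a₁₃² + a₂₃² − a₁ a₂ a₁₂ − a₁ a₃ a₁₃ − a₂ a₃ a₂₃ + a₁₂ a₁₃ a₂₃ − 4). Then the hypersurface Z = {x ∈ F⁷ : L(x) = 0} is irreducible; equivalently, the vanishing ideal of the zero set of L in F⁷ is a prime ideal of the polynomial ring F[a₁, a₂, a₃, a₁₂, a₁₃, a₂₃, a₁₂₃]. -/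

import Mathlib

open MvPolynomial

noncomputable section FrickeVogtAux

/-- Coefficient `b` in the presentation of the Fricke polynomial as `Y² - b·Y + c`. -/
private def fvB (F : Type*) [Field F] : MvPolynomial (Fin 6) F :=
  X 2 * X 1 + X 3 * X 0 + X 4 * X 5 - X 5 * X 0 * X 1

/-- Coefficient `c` in the presentation of the Fricke polynomial as `Y² - b·Y + c`. -/
private def fvC (F : Type*) [Field F] : MvPolynomial (Fin 6) F :=
  X 5 ^ 2 + X 0 ^ 2 + X 1 ^ 2 + X 2 ^ 2 + X 3 ^ 2 + X 4 ^ 2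
    - X 5 * X 0 * X 2 - X 5 * X 1 * X 3 - X 0 * X 1 * X 4 + X 2 * X 3 * X 4 - 4

/-- The isomorphism separating the variable `X 6`. -/
private def fvE (F : Type*) [Field F] :
    MvPolynomial (Fin 7) F ≃ₐ[F] Polynomial (MvPolynomial (Fin 6) F) :=
  (MvPolynomial.renameEquiv F (Equiv.swap (0 : Fin 7) 6)).trans (MvPolynomial.finSuccEquiv F 6)

/-- There is no monic linear factorization: no `c₁, c₂` with `c₁c₂ = c` and `c₁+c₂ = -b`. -/
private lemma fv_no_factor (F : Type*) [Field F] (c₁ c₂ : MvPolynomial (Fin 6) F)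
    (h0 : fvC F = c₁ * c₂) (h1 : -fvB F = c₁ + c₂) : False := by
  by_cases h2 : (2 : F) = 0
  · -- characteristic 2 case: substitute y1 ↦ 1, y2 ↦ t, rest 0
    set v : Fin 6 → Polynomial F := fun i => if i = 2 then Polynomial.X else
      if i = 1 then 1 else 0 with hv
    have hb : aeval v (fvB F) = Polynomial.X := by
      simp +decide [fvB, hv, aeval_X]
    have hc : aeval v (fvC F) = Polynomial.X ^ 2 - 3 := by
      simp +decide only [fvC, hv, map_add, map_sub, map_mul, map_pow, map_ofNat, aeval_X,
        if_true, if_false]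
      norm_num
      ring
    set P := aeval v c₁ with hP
    set Q := aeval v c₂ with hQ
    have hmul : P * Q = Polynomial.X ^ 2 - 3 := by
      rw [hP, hQ, ← map_mul, ← h0, hc]
    have hsum : P + Q = -Polynomial.X := by
      rw [hP, hQ, ← map_add, ← h1, map_neg, hb]
    have hq0 : Q.coeff 0 = -P.coeff 0 := by
      have := congrArg (Polynomial.coeff · 0) hsum
      simp at this; linear_combination this
    have hq1 : Q.coeff 1 = -1 - P.coeff 1 := by
      have := congrArg (Polynomial.coeff · 1) hsum
      simp at this; linear_combination this
    have hm0 : P.coeff 0 * Q.coeff 0 = -3 := by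
      have := congrArg (Polynomial.coeff · 0) hmul
      simp [Polynomial.mul_coeff_zero] at this
      linear_combination this
    have hm1 : P.coeff 0 * Q.coeff 1 + P.coeff 1 * Q.coeff 0 = 0 := by
      have := congrArg (Polynomial.coeff · 1) hmul
      simp [Polynomial.coeff_mul, Finset.Nat.sum_antidiagonal_eq_sum_range_succ_mk,
        Finset.sum_range_succ] at this
      linear_combination this
    rw [hq0] at hm0
    rw [hq0, hq1] at hm1
    have h3 : (3 : F) = 1 := by
      have h' : (3 : F) = 2 + 1 := by norm_num
      rw [h', h2, zero_add]
    have hp00 : P.coeff 0 = 0 := by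
      have hh : -P.coeff 0 - 2 * (P.coeff 0 * P.coeff 1) = 0 := by linear_combination hm1
      rw [h2] at hh; linear_combination -hh
    rw [hp00, h3] at hm0
    exact one_ne_zero (by linear_combination hm0 : (1:F) = 0)
  · -- characteristic ≠ 2: substitute y2 ↦ t, rest 0
    set v : Fin 6 → Polynomial F := fun i => if i = 2 then Polynomial.X else 0 with hv
    have hb : aeval v (fvB F) = 0 := by simp +decide [fvB, hv, aeval_X]
    have hc : aeval v (fvC F) = Polynomial.X ^ 2 - 4 := by
      simp +decide only [fvC, hv, map_add, map_sub, map_mul, map_pow, map_ofNat, aeval_X,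
        if_true, if_false]
      norm_num
    set P := aeval v c₁ with hP
    set Q := aeval v c₂ with hQ
    have hsum : P + Q = 0 := by rw [hP, hQ, ← map_add, ← h1, map_neg, hb, neg_zero]
    have hQP : Q = -P := by linear_combination hsum
    have hmul : P * P = (4 : Polynomial F) - Polynomial.X ^ 2 := by
      have h' : P * Q = Polynomial.X ^ 2 - 4 := by
        rw [hP, hQ, ← map_mul, ← h0, hc]
      rw [hQP] at h'; linear_combination -h'
    have h4 : (4 : F) ≠ 0 := by
      intro h; apply h2
      have h' : (2:F) * 2 = 0 := by rw [← h]; norm_num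
      rcases mul_eq_zero.mp h' with h | h <;> exact h
    have hPne : P ≠ 0 := by
      intro h
      have := congrArg (Polynomial.coeff · 2) hmul
      simp [h, Polynomial.coeff_X_pow] at this
    have hdeg : P.natDegree = 1 := by
      have hd1 : (P * P).natDegree = P.natDegree + P.natDegree :=
        Polynomial.natDegree_mul hPne hPne
      rw [hmul] at hd1
      have hd2 : ((4 : Polynomial F) - Polynomial.X ^ 2).natDegree = 2 := by
        rw [show (4 : Polynomial F) - Polynomial.X ^ 2
            = -(Polynomial.X ^ 2 - Polynomial.C 4) by
              rw [show Polynomial.C (4:F) = 4 from map_ofNat _ 4]; ring,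
          Polynomial.natDegree_neg, Polynomial.natDegree_X_pow_sub_C]
      omega
    have hp2 : P.coeff 2 = 0 :=
      Polynomial.coeff_eq_zero_of_natDegree_lt (by rw [hdeg]; norm_num)
    have e0 := congrArg (Polynomial.coeff · 0) hmul
    have e1 := congrArg (Polynomial.coeff · 1) hmul
    have e2 := congrArg (Polynomial.coeff · 2) hmul
    simp [Polynomial.coeff_mul, Finset.Nat.sum_antidiagonal_eq_sum_range_succ_mk,
      Finset.sum_range_succ, Polynomial.coeff_X_pow, hp2] at e0 e1 e2
    have hcase : P.coeff 0 * P.coeff 1 = 0 := by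
      have h' : (2:F) * (P.coeff 0 * P.coeff 1) = 0 := by linear_combination e1
      rcases mul_eq_zero.mp h' with h | h
      · exact absurd h h2
      · exact h
    rcases mul_eq_zero.mp hcase with h | h
    · rw [h] at e0; exact h4 (by linear_combination -e0)
    · rw [h] at e2; exact one_ne_zero (by linear_combination e2 : (1:F) = 0)

/-- The Fricke–Vogt polynomial is irreducible. -/
private lemma fv_irreducible (F : Type*) [Field F] :
    Irreducible ((X 6 : MvPolynomial (Fin 7) F) ^ 2
            - X 6 * (X 3 * X 2 + X 4 * X 1 + X 5 * X 0 - X 0 * X 1 * X 2)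
            + (X 0 ^ 2 + X 1 ^ 2 + X 2 ^ 2 + X 3 ^ 2 + X 4 ^ 2 + X 5 ^ 2
              - X 0 * X 1 * X 3 - X 0 * X 2 * X 4 - X 1 * X 2 * X 5
              + X 3 * X 4 * X 5 - 4)) := by
  apply (MulEquiv.irreducible_iff (fvE F)).mp
  have key : fvE F ((X 6 : MvPolynomial (Fin 7) F) ^ 2
            - X 6 * (X 3 * X 2 + X 4 * X 1 + X 5 * X 0 - X 0 * X 1 * X 2)
            + (X 0 ^ 2 + X 1 ^ 2 + X 2 ^ 2 + X 3 ^ 2 + X 4 ^ 2 + X 5 ^ 2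
              - X 0 * X 1 * X 3 - X 0 * X 2 * X 4 - X 1 * X 2 * X 5
              + X 3 * X 4 * X 5 - 4))
      = Polynomial.X ^ 2 - Polynomial.C (fvB F) * Polynomial.X + Polynomial.C (fvC F) := by
    have e0 : fvE F (X 0) = Polynomial.C (X 5) := by
      show (finSuccEquiv F 6) (rename (Equiv.swap (0:Fin 7) 6) (X 0)) = _
      rw [rename_X, Equiv.swap_apply_left, show (6 : Fin 7) = Fin.succ 5 from rfl,
        finSuccEquiv_X_succ]
    have e6 : fvE F (X 6) = Polynomial.X := by
      show (finSuccEquiv F 6) (rename (Equiv.swap (0:Fin 7) 6) (X 6)) = _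
      rw [rename_X, Equiv.swap_apply_right, finSuccEquiv_X_zero]
    have ei : ∀ (i : Fin 7) (j : Fin 6), i ≠ 0 → i ≠ 6 → i = Fin.succ j →
        fvE F (X i) = Polynomial.C (X j) := by
      intro i j hi0 hi6 hij
      show (finSuccEquiv F 6) (rename (Equiv.swap (0:Fin 7) 6) (X i)) = _
      rw [rename_X, Equiv.swap_apply_of_ne_of_ne hi0 hi6, hij, finSuccEquiv_X_succ]
    have e1 := ei 1 0 (by decide) (by decide) rfl
    have e2 := ei 2 1 (by decide) (by decide) rfl
    have e3 := ei 3 2 (by decide) (by decide) rfl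
    have e4 := ei 4 3 (by decide) (by decide) rfl
    have e5 := ei 5 4 (by decide) (by decide) rfl
    rw [fvB, fvC]
    simp only [map_add, map_sub, map_mul, map_pow, map_ofNat, e0, e1, e2, e3, e4, e5, e6]
    push_cast [← Polynomial.C_mul, ← Polynomial.C_add, ← Polynomial.C_sub]
    ring
  rw [key]
  set q : Polynomial (MvPolynomial (Fin 6) F) :=
    Polynomial.X ^ 2 - Polynomial.C (fvB F) * Polynomial.X + Polynomial.C (fvC F) with hq
  have hq' : q = Polynomial.C 1 * Polynomial.X ^ 2 + Polynomial.C (-(fvB F)) * Polynomial.X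
      + Polynomial.C (fvC F) := by
    rw [hq, Polynomial.C_neg, Polynomial.C_1]; ring
  have hmonic : q.Monic := by
    rw [Polynomial.Monic, hq', Polynomial.leadingCoeff_quadratic one_ne_zero]
  have hnd : q.natDegree = 2 := by
    rw [hq']; exact Polynomial.natDegree_quadratic one_ne_zero
  by_contra hni
  obtain ⟨c₁, c₂, h0, h1⟩ :=
    (hmonic.not_irreducible_iff_exists_add_mul_eq_coeff hnd).mp hni
  have hc0 : q.coeff 0 = fvC F := by
    simp [hq, Polynomial.coeff_X_pow]
  have hc1 : q.coeff 1 = -(fvB F) := by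
    simp [hq, Polynomial.coeff_X_pow]
  rw [hc0] at h0
  rw [hc1] at h1
  exact fv_no_factor F c₁ c₂ h0 h1

end FrickeVogtAux

/-- Over an algebraically closed field `F`, the Fricke–Vogt hypersurface
`Z = {x ∈ F⁷ : L(x) = 0}` is irreducible: the vanishing ideal of the zero set of `L`
is a prime ideal of `F[a₁, a₂, a₃, a₁₂, a₁₃, a₂₃, a₁₂₃]`.
Variables: `a₁ = X 0`, `a₂ = X 1`, `a₃ = X 2`, `a₁₂ = X 3`, `a₁₃ = X 4`, `a₂₃ = X 5`,
`a₁₂₃ = X 6`. -/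
theorem stmt4 (F : Type*) [Field F] [IsAlgClosed F] :
    (MvPolynomial.vanishingIdeal F
      {x : Fin 7 → F |
        MvPolynomial.eval x
          ((X 6 : MvPolynomial (Fin 7) F) ^ 2
            - X 6 * (X 3 * X 2 + X 4 * X 1 + X 5 * X 0 - X 0 * X 1 * X 2)
            + (X 0 ^ 2 + X 1 ^ 2 + X 2 ^ 2 + X 3 ^ 2 + X 4 ^ 2 + X 5 ^ 2
              - X 0 * X 1 * X 3 - X 0 * X 2 * X 4 - X 1 * X 2 * X 5
              + X 3 * X 4 * X 5 - 4)) = 0}).IsPrime := by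
  set L : MvPolynomial (Fin 7) F :=
    (X 6 : MvPolynomial (Fin 7) F) ^ 2
      - X 6 * (X 3 * X 2 + X 4 * X 1 + X 5 * X 0 - X 0 * X 1 * X 2)
      + (X 0 ^ 2 + X 1 ^ 2 + X 2 ^ 2 + X 3 ^ 2 + X 4 ^ 2 + X 5 ^ 2
        - X 0 * X 1 * X 3 - X 0 * X 2 * X 4 - X 1 * X 2 * X 5
        + X 3 * X 4 * X 5 - 4) with hL
  have hirr : Irreducible L := fv_irreducible F
  have hprime : Prime L := hirr.prime
  have hIP : (Ideal.span {L}).IsPrime :=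
    (Ideal.span_singleton_prime hprime.ne_zero).mpr hprime
  have hset : {x : Fin 7 → F | MvPolynomial.eval x L = 0}
      = MvPolynomial.zeroLocus F (Ideal.span {L}) := by
    rw [MvPolynomial.zeroLocus_span]
    ext x
    simp
  rw [hset, MvPolynomial.vanishingIdeal_zeroLocus_eq_radical, hIP.radical]
  exact hIP
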